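/- Let T be a finitary monad on a locally finitely presentable category K. Then the Eilenberg–Moore category K^T is locally finitely presentable. -/

import Mathlib

open CategoryTheory Limits Opposite

universe w w' v v₁ v₂ v₃ u u₁ u₂ u₃

namespace Formal

section Pullback

variable {A : Type u₁} {B : Type u₂} {K : Type u₃}
  [Category.{v₁} A] [Category.{v₂} B] [Category.{v₃} K]

/-- The strict pullback of two functors in the category of categories:
objects are pairs `(a, b)` with `U.obj a = V.obj b`. -/
structure CatPullback (U : A ⥤ K) (V : B ⥤ K) : Type max u₁ u₂ where
  left : A
  right : B
  w : U.obj left = V.obj right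

@[ext]
structure CatPullbackHom {U : A ⥤ K} {V : B ⥤ K} (X Y : CatPullback U V) where
  fl : X.left ⟶ Y.left
  fr : X.right ⟶ Y.right
  w : U.map fl ≫ eqToHom Y.w = eqToHom X.w ≫ V.map fr

instance (U : A ⥤ K) (V : B ⥤ K) : Category (CatPullback U V) where
  Hom := CatPullbackHom
  id X := ⟨𝟙 _, 𝟙 _, by simp⟩
  comp f g := ⟨f.fl ≫ g.fl, f.fr ≫ g.fr, by
    rw [Functor.map_comp, Functor.map_comp, Category.assoc, g.w, ← Category.assoc, f.w,
      Category.assoc]⟩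

/-- First projection of the pullback of categories. -/
def CatPullback.π₁ (U : A ⥤ K) (V : B ⥤ K) : CatPullback U V ⥤ A where
  obj X := X.left
  map f := f.fl

/-- Second projection of the pullback of categories. -/
def CatPullback.π₂ (U : A ⥤ K) (V : B ⥤ K) : CatPullback U V ⥤ B where
  obj X := X.right
  map f := f.fr

/-- The diagonal of the pullback square of categories. -/
def CatPullback.diag (U : A ⥤ K) (V : B ⥤ K) : CatPullback U V ⥤ K :=
  CatPullback.π₁ U V ⋙ U

end Pullback

section LFP

variable {C : Type u} [Category.{v} C]

/-- An object is finitely presentable if its covariant hom-functor preserves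
filtered colimits. -/
def FinitelyPresentable (X : C) : Prop :=
  PreservesFilteredColimitsOfSize.{v, v} (coyoneda.obj (op X))

/-- A category is locally finitely presentable if it is cocomplete and has a small
detecting (strong generating) set of finitely presentable objects. -/
def LocallyFinitelyPresentable (C : Type u) [Category.{v} C] : Prop :=
  HasColimitsOfSize.{v, v} C ∧
    ∃ S : Set C, Small.{v} S ∧ (∀ X ∈ S, FinitelyPresentable X) ∧ ObjectProperty.IsDetecting (fun X => X ∈ S)

/-- A monad is finitary if its underlying endofunctor preserves filtered colimits. -/
def Monad.Finitary (T : CategoryTheory.Monad C) : Prop :=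
  PreservesFilteredColimitsOfSize.{v, v} (T : C ⥤ C)

end LFP
section Cardinal

variable {C : Type u} [Category.{v} C] {D : Type u₁} [Category.{v₁} D]

/-- A category is `κ`-filtered if every diagram of size `< κ` admits a cocone. -/
def IsCardinalFiltered (J : Type u) [Category.{v} J] (κ : Cardinal.{w}) : Prop :=
  ∀ (D : Type w) [SmallCategory D], Cardinal.mk (Σ X Y : D, X ⟶ Y) < κ →
    ∀ F : D ⥤ J, Nonempty (Cocone F)

/-- A functor preserves `κ`-filtered colimits. -/
def PreservesCardinalFilteredColimits (F : C ⥤ D) (κ : Cardinal.{w}) : Prop :=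
  ∀ (J : Type w) [SmallCategory J], IsCardinalFiltered J κ → PreservesColimitsOfShape J F

/-- An object is `κ`-presentable if its hom-functor preserves `κ`-filtered colimits. -/
def CardinalPresentable (X : C) (κ : Cardinal.{v}) : Prop :=
  PreservesCardinalFilteredColimits (coyoneda.obj (op X)) κ

/-- A category is locally `κ`-presentable if it is cocomplete and has a small detecting
(strong generating) set of `κ`-presentable objects. -/
def LocallyCardinalPresentable (C : Type u) [Category.{v} C] (κ : Cardinal.{v}) : Prop :=
  HasColimitsOfSize.{v, v} C ∧
    ∃ S : Set C, Small.{v} S ∧ (∀ X ∈ S, CardinalPresentable X κ) ∧ ObjectProperty.IsDetecting (fun X => X ∈ S)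

/-- A category is locally presentable if it is locally `κ`-presentable for some
regular cardinal `κ`. -/
def LocallyPresentable (C : Type u) [Category.{v} C] : Prop :=
  ∃ κ : Cardinal.{v}, κ.IsRegular ∧ LocallyCardinalPresentable C κ

end Cardinal
section ChainCoeq

variable {K : Type u} [Category.{v} K]

/-- One stage of the iterative construction of coequalizers of algebras. -/
structure Stage (T : CategoryTheory.Monad K) : Type max u v where
  X : K
  Y : K
  q : X ⟶ Y
  t : T.obj X ⟶ Y

variable {T : CategoryTheory.Monad K} [HasColimitsOfSize.{0, 0} K]

namespace Stage

variable (s : Stage T)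

/-- pushout injection -/
noncomputable def pl : T.obj s.Y ⟶ pushout (T.map s.q) s.t := pushout.inl _ _

/-- pushout injection -/
noncomputable def pr : s.Y ⟶ pushout (T.map s.q) s.t := pushout.inr _ _

/-- first coequalizer projection (forcing the unit law) -/
noncomputable def rr : pushout (T.map s.q) s.t ⟶ coequalizer s.pr (T.η.app s.Y ≫ s.pl) :=
  coequalizer.π _ _

/-- second coequalizer projection (forcing the associativity law) -/
noncomputable def zz : coequalizer s.pr (T.η.app s.Y ≫ s.pl) ⟶
    coequalizer (T.μ.app s.X ≫ s.t ≫ s.pr ≫ s.rr) (T.map s.t ≫ s.pl ≫ s.rr) :=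
  coequalizer.π _ _

/-- the next stage -/
@[reducible] noncomputable def step : Stage T where
  X := s.Y
  Y := coequalizer (T.μ.app s.X ≫ s.t ≫ s.pr ≫ s.rr) (T.map s.t ≫ s.pl ≫ s.rr)
  q := s.pr ≫ s.rr ≫ s.zz
  t := s.pl ≫ s.rr ≫ s.zz

@[simp] lemma step_X : s.step.X = s.Y := rfl
@[simp] lemma step_q : s.step.q = s.pr ≫ s.rr ≫ s.zz := rfl
@[simp] lemma step_t : s.step.t = s.pl ≫ s.rr ≫ s.zz := rfl

lemma pushout_cond : T.map s.q ≫ s.pl = s.t ≫ s.pr := pushout.condition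

lemma coeq1_cond : s.pr ≫ s.rr = (T.η.app s.Y ≫ s.pl) ≫ s.rr := coequalizer.condition _ _

lemma coeq2_cond : (T.μ.app s.X ≫ s.t ≫ s.pr ≫ s.rr) ≫ s.zz =
    (T.map s.t ≫ s.pl ≫ s.rr) ≫ s.zz := coequalizer.condition _ _

lemma step_comm : T.map s.q ≫ s.step.t = s.t ≫ s.step.q := by
  erw [step_q, step_t, reassoc_of% s.pushout_cond]

lemma step_unit : T.η.app s.Y ≫ s.step.t = s.step.q := by
  erw [step_q, step_t, ← Category.assoc, ← Category.assoc]
  rw [show (T.η.app s.Y ≫ s.pl) ≫ s.rr = s.pr ≫ s.rr from s.coeq1_cond.symm]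
  simp only [Category.assoc]

lemma step_assoc : T.μ.app s.X ≫ s.t ≫ s.step.q = T.map s.t ≫ s.step.t := by
  have h := s.coeq2_cond
  simp only [Category.assoc] at h
  simpa only [step_q, step_t, Category.assoc] using h

lemma step_jointEpi {W : K} {u v : s.step.Y ⟶ W}
    (h1 : s.step.q ≫ u = s.step.q ≫ v) (h2 : s.step.t ≫ u = s.step.t ≫ v) : u = v := by
  simp only [step_q, step_t, Category.assoc] at h1 h2
  have hP : s.rr ≫ s.zz ≫ u = s.rr ≫ s.zz ≫ v := by
    apply pushout.hom_ext
    · exact h2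
    · exact h1
  haveI hr : Epi s.rr := show Epi (coequalizer.π _ _) from inferInstance
  haveI hz : Epi s.zz := show Epi (coequalizer.π _ _) from inferInstance
  have := (cancel_epi s.rr).1 hP
  exact (cancel_epi s.zz).1 this



section DescStage

variable (s : Stage T)

lemma pl_desc {W : K} (k₁ : T.obj s.Y ⟶ W) (k₂ : s.Y ⟶ W)
    (hw : T.map s.q ≫ k₁ = s.t ≫ k₂) : s.pl ≫ pushout.desc k₁ k₂ hw = k₁ :=
  pushout.inl_desc _ _ _

lemma pr_desc {W : K} (k₁ : T.obj s.Y ⟶ W) (k₂ : s.Y ⟶ W)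
    (hw : T.map s.q ≫ k₁ = s.t ≫ k₂) : s.pr ≫ pushout.desc k₁ k₂ hw = k₂ :=
  pushout.inr_desc _ _ _

lemma rr_desc {W : K} (k : pushout (T.map s.q) s.t ⟶ W)
    (hw : s.pr ≫ k = (T.η.app s.Y ≫ s.pl) ≫ k) : s.rr ≫ coequalizer.desc k hw = k :=
  coequalizer.π_desc _ _

lemma zz_desc {W : K} (k : coequalizer s.pr (T.η.app s.Y ≫ s.pl) ⟶ W)
    (hw : (T.μ.app s.X ≫ s.t ≫ s.pr ≫ s.rr) ≫ k = (T.map s.t ≫ s.pl ≫ s.rr) ≫ k) :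
    s.zz ≫ coequalizer.desc k hw = k :=
  coequalizer.π_desc _ _

variable (D : T.Algebra)

lemma descStep_cond1 (u : s.X ⟶ D.A) (u' : s.Y ⟶ D.A)
    (h1 : s.q ≫ u' = u) (h2 : s.t ≫ u' = T.map u ≫ D.a) :
    T.map s.q ≫ T.map u' ≫ D.a = s.t ≫ u' := by
  rw [← Functor.map_comp_assoc, h1, h2]

/-- The map from the pushout stage. -/
noncomputable def descP (u : s.X ⟶ D.A) (u' : s.Y ⟶ D.A)
    (h1 : s.q ≫ u' = u) (h2 : s.t ≫ u' = T.map u ≫ D.a) : pushout (T.map s.q) s.t ⟶ D.A :=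
  pushout.desc (T.map u' ≫ D.a) u' (s.descStep_cond1 D u u' h1 h2)

lemma pr_descP (u : s.X ⟶ D.A) (u' : s.Y ⟶ D.A)
    (h1 : s.q ≫ u' = u) (h2 : s.t ≫ u' = T.map u ≫ D.a) :
    s.pr ≫ s.descP D u u' h1 h2 = u' := s.pr_desc _ _ _

lemma pl_descP (u : s.X ⟶ D.A) (u' : s.Y ⟶ D.A)
    (h1 : s.q ≫ u' = u) (h2 : s.t ≫ u' = T.map u ≫ D.a) :
    s.pl ≫ s.descP D u u' h1 h2 = T.map u' ≫ D.a := s.pl_desc _ _ _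

lemma descStep_cond2 (u : s.X ⟶ D.A) (u' : s.Y ⟶ D.A)
    (h1 : s.q ≫ u' = u) (h2 : s.t ≫ u' = T.map u ≫ D.a) :
    s.pr ≫ s.descP D u u' h1 h2 = (T.η.app s.Y ≫ s.pl) ≫ s.descP D u u' h1 h2 := by
  have hn : T.η.app s.Y ≫ T.map u' = u' ≫ T.η.app D.A := by
    simpa using (T.η.naturality u').symm
  rw [s.pr_descP D u u' h1 h2, Category.assoc, s.pl_descP D u u' h1 h2, ← Category.assoc, hn,
    Category.assoc, D.unit, Category.comp_id]

/-- The map from the first coequalizer stage. -/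
noncomputable def descR (u : s.X ⟶ D.A) (u' : s.Y ⟶ D.A)
    (h1 : s.q ≫ u' = u) (h2 : s.t ≫ u' = T.map u ≫ D.a) :
    coequalizer s.pr (T.η.app s.Y ≫ s.pl) ⟶ D.A :=
  coequalizer.desc (s.descP D u u' h1 h2) (s.descStep_cond2 D u u' h1 h2)

lemma rr_descR (u : s.X ⟶ D.A) (u' : s.Y ⟶ D.A)
    (h1 : s.q ≫ u' = u) (h2 : s.t ≫ u' = T.map u ≫ D.a) :
    s.rr ≫ s.descR D u u' h1 h2 = s.descP D u u' h1 h2 := s.rr_desc _ _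

lemma descStep_cond3 (u : s.X ⟶ D.A) (u' : s.Y ⟶ D.A)
    (h1 : s.q ≫ u' = u) (h2 : s.t ≫ u' = T.map u ≫ D.a) :
    (T.μ.app s.X ≫ s.t ≫ s.pr ≫ s.rr) ≫ s.descR D u u' h1 h2 =
      (T.map s.t ≫ s.pl ≫ s.rr) ≫ s.descR D u u' h1 h2 := by
  have hμn : T.map (T.map u) ≫ T.μ.app D.A = T.μ.app s.X ≫ T.map u := T.μ.naturality u
  simp only [Category.assoc]
  rw [s.rr_descR D u u' h1 h2, s.pr_descP D u u' h1 h2, s.pl_descP D u u' h1 h2, h2,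
    ← Functor.map_comp_assoc, h2, Functor.map_comp_assoc, ← D.assoc, ← reassoc_of% hμn]

/-- The induced map out of the next stage. -/
noncomputable def descStep (u : s.X ⟶ D.A) (u' : s.Y ⟶ D.A)
    (h1 : s.q ≫ u' = u) (h2 : s.t ≫ u' = T.map u ≫ D.a) : s.step.Y ⟶ D.A :=
  coequalizer.desc (s.descR D u u' h1 h2) (s.descStep_cond3 D u u' h1 h2)

lemma zz_descStep (u : s.X ⟶ D.A) (u' : s.Y ⟶ D.A)
    (h1 : s.q ≫ u' = u) (h2 : s.t ≫ u' = T.map u ≫ D.a) :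
    s.zz ≫ s.descStep D u u' h1 h2 = s.descR D u u' h1 h2 := s.zz_desc _ _

lemma descStep_q (u : s.X ⟶ D.A) (u' : s.Y ⟶ D.A)
    (h1 : s.q ≫ u' = u) (h2 : s.t ≫ u' = T.map u ≫ D.a) :
    s.step.q ≫ s.descStep D u u' h1 h2 = u' := by
  erw [step_q, Category.assoc, Category.assoc, s.zz_descStep D u u' h1 h2,
    s.rr_descR D u u' h1 h2, s.pr_descP D u u' h1 h2]

lemma descStep_t (u : s.X ⟶ D.A) (u' : s.Y ⟶ D.A)
    (h1 : s.q ≫ u' = u) (h2 : s.t ≫ u' = T.map u ≫ D.a) :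
    s.step.t ≫ s.descStep D u u' h1 h2 = T.map u' ≫ D.a := by
  erw [step_t, Category.assoc, Category.assoc, s.zz_descStep D u u' h1 h2,
    s.rr_descR D u u' h1 h2, s.pl_descP D u u' h1 h2]

end DescStage

end Stage

variable {A B : T.Algebra} (f g : A ⟶ B)

/-- The base stage: the coequalizer in `K` of the underlying maps. -/
noncomputable def stage0 : Stage T :=
  ⟨B.A, coequalizer f.f g.f, coequalizer.π f.f g.f, B.a ≫ coequalizer.π f.f g.f⟩

/-- The sequence of stages. -/
noncomputable def stages (n : ℕ) : Stage T :=
  Nat.rec (stage0 f g) (fun _ s => s.step) n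

/-- The objects of the chain. -/
noncomputable def Qb (n : ℕ) : K := (stages f g n).X

/-- The connecting maps of the chain. -/
noncomputable def qb (n : ℕ) : Qb f g n ⟶ Qb f g (n + 1) := (stages f g n).q

/-- The partial algebra structure maps. -/
noncomputable def tb (n : ℕ) : T.obj (Qb f g n) ⟶ Qb f g (n + 1) := (stages f g n).t

lemma tb_comm (n : ℕ) : T.map (qb f g n) ≫ tb f g (n + 1) = tb f g n ≫ qb f g (n + 1) :=
  (stages f g n).step_comm

lemma tb_unit : ∀ n, T.η.app (Qb f g n) ≫ tb f g n = qb f g n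
  | 0 => by
    show T.η.app B.A ≫ B.a ≫ coequalizer.π f.f g.f = coequalizer.π f.f g.f
    rw [B.unit_assoc]
  | n + 1 => (stages f g n).step_unit

lemma tb_assoc (n : ℕ) :
    T.μ.app (Qb f g n) ≫ tb f g n ≫ qb f g (n + 1) = T.map (tb f g n) ≫ tb f g (n + 1) :=
  (stages f g n).step_assoc

lemma jointEpi : ∀ (n : ℕ) {W : K} (u v : Qb f g (n + 1) ⟶ W),
    qb f g n ≫ u = qb f g n ≫ v → tb f g n ≫ u = tb f g n ≫ v → u = v
  | 0 => fun u v h1 _ => by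
    have : Epi (qb f g 0) := show Epi (coequalizer.π f.f g.f) from inferInstance
    exact (cancel_epi (qb f g 0)).1 h1
  | n + 1 => fun u v h1 h2 => (stages f g n).step_jointEpi h1 h2

section Colim

variable [PreservesColimitsOfShape ℕ (T : K ⥤ K)]

/-- The chain whose colimit carries the coequalizer algebra. -/
noncomputable def chainQ : ℕ ⥤ K := Functor.ofSequence (qb f g)

/-- The colimit of the chain. -/
noncomputable def CC : K := colimit (chainQ f g)

/-- The colimit injections. -/
noncomputable def ιQ (n : ℕ) : Qb f g n ⟶ CC f g := colimit.ι (chainQ f g) n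

lemma ιQ_succ (n : ℕ) : qb f g n ≫ ιQ f g (n + 1) = ιQ f g n := by
  have h := colimit.w (chainQ f g) (homOfLE (Nat.le_add_right n 1))
  rw [show (chainQ f g).map (homOfLE (Nat.le_add_right n 1)) = qb f g n from
    Functor.ofSequence_map_homOfLE_succ _ n] at h
  exact h

/-- `T` applied to the colimit cocone is a colimit. -/
noncomputable def TQcolim : IsColimit ((T : K ⥤ K).mapCocone (colimit.cocone (chainQ f g))) :=
  isColimitOfPreserves _ (colimit.isColimit _)

/-- The cocone defining the algebra structure map. -/
noncomputable def mcocone : Cocone (chainQ f g ⋙ (T : K ⥤ K)) where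
  pt := CC f g
  ι := NatTrans.ofSequence (fun n => tb f g n ≫ ιQ f g (n + 1)) (fun n => by
    dsimp only [Functor.const_obj_obj, Functor.const_obj_map]
    erw [Category.comp_id, Functor.comp_map,
      show (chainQ f g).map (homOfLE (Nat.le_add_right n 1)) = qb f g n from
        Functor.ofSequence_map_homOfLE_succ _ n,
      ← Category.assoc, tb_comm, Category.assoc, ιQ_succ])

/-- The algebra structure map on the colimit. -/
noncomputable def mQ : T.obj (CC f g) ⟶ CC f g := (TQcolim f g).desc (mcocone f g)

lemma mQ_fac (n : ℕ) : T.map (ιQ f g n) ≫ mQ f g = tb f g n ≫ ιQ f g (n + 1) :=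
  (TQcolim f g).fac (mcocone f g) n

/-- The colimit algebra. -/
noncomputable def Qalg : T.Algebra where
  A := CC f g
  a := mQ f g
  unit := by
    apply colimit.hom_ext
    intro n
    show ιQ f g n ≫ T.η.app (CC f g) ≫ mQ f g = ιQ f g n ≫ 𝟙 (CC f g)
    have h1 : ιQ f g n ≫ T.η.app (CC f g) = T.η.app (Qb f g n) ≫ T.map (ιQ f g n) := by
      simpa using T.η.naturality (ιQ f g n)
    rw [Category.comp_id, ← Category.assoc, h1, Category.assoc, mQ_fac, ← Category.assoc,
      tb_unit, ιQ_succ]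
  assoc := by
    apply (isColimitOfPreserves (T : K ⥤ K) (TQcolim f g)).hom_ext
    intro n
    show T.map (T.map (ιQ f g n)) ≫ T.μ.app (CC f g) ≫ mQ f g
        = T.map (T.map (ιQ f g n)) ≫ T.map (mQ f g) ≫ mQ f g
    have hμ : T.map (T.map (ιQ f g n)) ≫ T.μ.app (CC f g)
        = T.μ.app (Qb f g n) ≫ T.map (ιQ f g n) := T.μ.naturality (ιQ f g n)
    rw [← Category.assoc, hμ, Category.assoc, mQ_fac,
      ← Functor.map_comp_assoc, mQ_fac, Functor.map_comp_assoc, mQ_fac,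
      ← reassoc_of% (tb_assoc f g n), ιQ_succ]

/-- The projection to the coequalizer algebra. -/
noncomputable def eAlg : B ⟶ Qalg f g where
  f := ιQ f g 0
  h := by
    show T.map (ιQ f g 0) ≫ mQ f g = B.a ≫ ιQ f g 0
    rw [mQ_fac]
    show (B.a ≫ qb f g 0) ≫ ιQ f g 1 = B.a ≫ ιQ f g 0
    erw [Category.assoc, ιQ_succ]

lemma eAlg_cond : f ≫ eAlg f g = g ≫ eAlg f g := by
  ext
  show f.f ≫ ιQ f g 0 = g.f ≫ ιQ f g 0
  rw [← ιQ_succ f g 0]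
  show f.f ≫ coequalizer.π f.f g.f ≫ ιQ f g 1 = g.f ≫ coequalizer.π f.f g.f ≫ ιQ f g 1
  erw [← Category.assoc, ← Category.assoc, coequalizer.condition]

section Desc

variable (D : T.Algebra) (hh : B ⟶ D) (w : f.f ≫ hh.f = g.f ≫ hh.f)

/-- The compatible system of maps out of the stages into a competing algebra. -/
noncomputable def usig : ∀ n : ℕ, Σ' (u : Qb f g n ⟶ D.A) (u' : Qb f g (n + 1) ⟶ D.A),
    qb f g n ≫ u' = u ∧ tb f g n ≫ u' = T.map u ≫ D.a := fun n =>
  Nat.rec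
    ⟨hh.f, coequalizer.desc hh.f w,
      coequalizer.π_desc _ _, by
        show (B.a ≫ coequalizer.π f.f g.f) ≫ coequalizer.desc hh.f w = T.map hh.f ≫ D.a
        rw [Category.assoc, coequalizer.π_desc, hh.h]⟩
    (fun n p =>
      ⟨p.2.1, (stages f g n).descStep D p.1 p.2.1 p.2.2.1 p.2.2.2,
        (stages f g n).descStep_q D p.1 p.2.1 p.2.2.1 p.2.2.2,
        (stages f g n).descStep_t D p.1 p.2.1 p.2.2.1 p.2.2.2⟩)
    n

lemma usig_q (n : ℕ) : qb f g n ≫ (usig f g D hh w (n + 1)).1 = (usig f g D hh w n).1 :=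
  (usig f g D hh w n).2.2.1

lemma usig_t (n : ℕ) :
    tb f g n ≫ (usig f g D hh w (n + 1)).1 = T.map (usig f g D hh w n).1 ≫ D.a :=
  (usig f g D hh w n).2.2.2

/-- The induced map out of the colimit. -/
noncomputable def kmap : CC f g ⟶ D.A :=
  colimit.desc (chainQ f g)
    { pt := D.A
      ι := NatTrans.ofSequence (fun n => (usig f g D hh w n).1) (fun n => by
        dsimp only [Functor.const_obj_obj, Functor.const_obj_map]
        erw [Category.comp_id,
          show (chainQ f g).map (homOfLE (Nat.le_add_right n 1)) = qb f g n from
            Functor.ofSequence_map_homOfLE_succ _ n]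
        exact usig_q f g D hh w n) }

lemma ι_kmap (n : ℕ) : ιQ f g n ≫ kmap f g D hh w = (usig f g D hh w n).1 :=
  colimit.ι_desc _ n

/-- The induced algebra morphism out of the colimit algebra. -/
noncomputable def khom : Qalg f g ⟶ D where
  f := kmap f g D hh w
  h := by
    show T.map (kmap f g D hh w) ≫ D.a = mQ f g ≫ kmap f g D hh w
    apply (TQcolim f g).hom_ext
    intro n
    show T.map (ιQ f g n) ≫ T.map (kmap f g D hh w) ≫ D.a
        = T.map (ιQ f g n) ≫ mQ f g ≫ kmap f g D hh w
    rw [← Functor.map_comp_assoc, ι_kmap, ← Category.assoc, mQ_fac, Category.assoc, ι_kmap,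
      usig_t]

lemma khom_uniq (m' : Qalg f g ⟶ D) (hm : eAlg f g ≫ m' = hh) : m' = khom f g D hh w := by
  have claim : ∀ n, ιQ f g n ≫ m'.f = (usig f g D hh w n).1 := by
    intro n
    induction n with
    | zero => exact congrArg Monad.Algebra.Hom.f hm
    | succ n ih =>
      apply jointEpi f g n
      · erw [← Category.assoc]
        rw [show qb f g n ≫ ιQ f g (n + 1) = ιQ f g n from ιQ_succ f g n, ih, usig_q]
      · have hfac : tb f g n ≫ ιQ f g (n + 1) = T.map (ιQ f g n) ≫ mQ f g := (mQ_fac f g n).symm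
        erw [← Category.assoc, hfac, Category.assoc,
          show mQ f g ≫ m'.f = T.map m'.f ≫ D.a from m'.h.symm, ← Category.assoc,
          ← Functor.map_comp, ih, usig_t]
  ext
  apply colimit.hom_ext
  intro n
  show ιQ f g n ≫ m'.f = ιQ f g n ≫ kmap f g D hh w
  rw [claim n, ι_kmap]

end Desc

/-- The coequalizer cofork in the category of algebras. -/
noncomputable def coforkAlg : Cofork f g := Cofork.ofπ (eAlg f g) (eAlg_cond f g)

/-- The cofork is a colimit: `T.Algebra` has coequalizers. -/
noncomputable def coforkAlgIsColimit : IsColimit (coforkAlg f g) :=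
  Cofork.IsColimit.mk' _ fun s => by
    have w : f.f ≫ (Cofork.π s).f = g.f ≫ (Cofork.π s).f :=
      congrArg Monad.Algebra.Hom.f s.condition
    refine ⟨khom f g s.pt (Cofork.π s) w, ?_, fun {m'} hm => ?_⟩
    · ext
      show ιQ f g 0 ≫ kmap f g s.pt (Cofork.π s) w = (Cofork.π s).f
      rw [ι_kmap]
      rfl
    · exact khom_uniq f g s.pt (Cofork.π s) w m' hm

end Colim

end ChainCoeq

section Triangle

variable {K : Type u} [Category.{v} K] {T : CategoryTheory.Monad K}
variable {J : Type w} [Category.{w'} J]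

/-- The structure maps of a diagram of algebras, as a natural transformation. -/
@[simps]
def algStructNat (X : J ⥤ T.Algebra) :
    (X ⋙ Monad.forget T) ⋙ (T : K ⥤ K) ⟶ X ⋙ Monad.forget T where
  app j := (X.obj j).a
  naturality _ _ φ := (X.map φ).h

/-- The diagram of free algebras on `T` applied to the underlying diagram. -/
def GOne (X : J ⥤ T.Algebra) : J ⥤ T.Algebra :=
  ((X ⋙ Monad.forget T) ⋙ (T : K ⥤ K)) ⋙ Monad.free T

/-- The diagram of free algebras on the underlying diagram. -/
def GTwo (X : J ⥤ T.Algebra) : J ⥤ T.Algebra :=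
  (X ⋙ Monad.forget T) ⋙ Monad.free T

/-- The top map of the pointwise Beck coequalizer. -/
def topN (X : J ⥤ T.Algebra) : GOne X ⟶ GTwo X :=
  Functor.whiskerRight (algStructNat X) (Monad.free T)

/-- The bottom map of the pointwise Beck coequalizer. -/
def botN (X : J ⥤ T.Algebra) : GOne X ⟶ GTwo X where
  app j := Monad.FreeCoequalizer.bottomMap (X.obj j)
  naturality j j' φ := by
    ext
    exact T.μ.naturality (X.map φ).f

/-- The pointwise Beck coequalizer projection. -/
def piN (X : J ⥤ T.Algebra) : GTwo X ⟶ X where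
  app j := Monad.FreeCoequalizer.π (X.obj j)
  naturality j j' φ := by
    ext
    exact (X.map φ).h

lemma condN (X : J ⥤ T.Algebra) : topN X ≫ piN X = botN X ≫ piN X :=
  NatTrans.ext (funext fun j => Monad.FreeCoequalizer.condition (X.obj j))

lemma epi_beck_π (X : T.Algebra) : Epi (Monad.FreeCoequalizer.π X) := by
  have : RegularEpi (Monad.FreeCoequalizer.π X) :=
    ⟨_, _, _, Monad.FreeCoequalizer.condition X, Monad.beckAlgebraCoequalizer X⟩
  exact RegularEpi.epi _ this

/-- The pointwise Beck cofork in the functor category is a colimit. -/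
noncomputable def isColimN (X : J ⥤ T.Algebra) :
    IsColimit (Cofork.ofπ (piN X) (condN X)) := by
  refine Cofork.IsColimit.mk' _ fun s => ?_
  have hcomp : ∀ j, Monad.FreeCoequalizer.topMap (X.obj j) ≫ s.π.app j =
      Monad.FreeCoequalizer.bottomMap (X.obj j) ≫ s.π.app j := by
    intro j
    have := congrArg (fun τ : GOne X ⟶ s.pt => τ.app j) s.condition
    exact this
  let dj : ∀ j, X.obj j ⟶ s.pt.obj j := fun j =>
    (Monad.beckAlgebraCoequalizer (X.obj j)).desc (Cofork.ofπ (s.π.app j) (hcomp j))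
  have hdj : ∀ j, Monad.FreeCoequalizer.π (X.obj j) ≫ dj j = s.π.app j := fun j =>
    Cofork.IsColimit.π_desc (Monad.beckAlgebraCoequalizer (X.obj j))
  haveI := fun j => epi_beck_π (X.obj j)
  refine ⟨{ app := dj, naturality := ?_ }, ?_, ?_⟩
  · intro j j' φ
    apply (cancel_epi (Monad.FreeCoequalizer.π (X.obj j))).1
    show Monad.FreeCoequalizer.π (X.obj j) ≫ X.map φ ≫ dj j'
        = Monad.FreeCoequalizer.π (X.obj j) ≫ dj j ≫ s.pt.map φ
    have h1 : Monad.FreeCoequalizer.π (X.obj j) ≫ X.map φ ≫ dj j'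
        = (GTwo X).map φ ≫ s.π.app j' := by
      erw [← Category.assoc,
        show Monad.FreeCoequalizer.π (X.obj j) ≫ X.map φ
            = (GTwo X).map φ ≫ (piN X).app j' from ((piN X).naturality φ).symm,
        Category.assoc]
      exact congrArg ((GTwo X).map φ ≫ ·) (hdj j')
    have h2 : Monad.FreeCoequalizer.π (X.obj j) ≫ dj j ≫ s.pt.map φ
        = s.π.app j ≫ s.pt.map φ := by
      rw [← Category.assoc, hdj j]
      rfl
    rw [h1, h2]
    exact s.π.naturality φ
  · apply NatTrans.ext
    funext j
    exact hdj j
  · intro m' hm'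
    apply NatTrans.ext
    funext j
    apply (cancel_epi (Monad.FreeCoequalizer.π (X.obj j))).1
    have h3 : (piN X).app j ≫ m'.app j = s.π.app j :=
      congrArg (fun τ : GTwo X ⟶ s.pt => τ.app j) hm'
    rw [show Monad.FreeCoequalizer.π (X.obj j) ≫ m'.app j = s.π.app j from h3, hdj j]

noncomputable def regularEpi_whiskerRight_counit (X : J ⥤ T.Algebra) :
    RegularEpi ((CategoryTheory.Adjunction.whiskerRight J (Monad.adj T)).counit.app X) := by
  have hπ : (CategoryTheory.Adjunction.whiskerRight J (Monad.adj T)).counit.app X = piN X := by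
    apply NatTrans.ext
    funext j
    show ((CategoryTheory.Adjunction.whiskerRight J (Monad.adj T)).counit.app X).app j
        = (piN X).app j
    apply Monad.Algebra.Hom.ext
    simp [Monad.adj, piN]
    exact Category.id_comp _
  rw [hπ]
  exact ⟨GOne X, topN X, botN X, condN X, isColimN X⟩

/-- If `K` has `J`-indexed colimits and `T.Algebra` has reflexive coequalizers, then
`T.Algebra` has `J`-indexed colimits. -/
lemma hasColimitsOfShape_algebra [HasColimitsOfShape J K]
    [HasReflexiveCoequalizers T.Algebra] : HasColimitsOfShape J T.Algebra := by
  rw [hasColimitsOfShape_iff_isRightAdjoint_const]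
  letI : ∀ X : J ⥤ T.Algebra,
      RegularEpi ((CategoryTheory.Adjunction.whiskerRight J (Monad.adj T)).counit.app X) :=
    regularEpi_whiskerRight_counit
  haveI : ((Functor.const J : T.Algebra ⥤ _) ⋙
      (Functor.whiskeringRight J T.Algebra K).obj (Monad.forget T)).IsRightAdjoint := by
    haveI : (Functor.const J : K ⥤ _).IsRightAdjoint :=
      hasColimitsOfShape_iff_isRightAdjoint_const.mp ‹_›
    haveI : (Monad.forget T ⋙ (Functor.const J : K ⥤ _)).IsRightAdjoint := inferInstance
    have hiso : ((Functor.const J : T.Algebra ⥤ _) ⋙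
        (Functor.whiskeringRight J T.Algebra K).obj (Monad.forget T))
          ≅ Monad.forget T ⋙ (Functor.const J : K ⥤ _) :=
      NatIso.ofComponents (fun A => Functor.constComp J _ (Monad.forget T))
        (by intros; ext; simp; exact Category.comp_id _)
    exact Functor.isRightAdjoint_of_iso hiso.symm
  exact CategoryTheory.isRightAdjoint_triangle_lift (Functor.const J)
    (CategoryTheory.Adjunction.whiskerRight J (Monad.adj T)) regularEpi_whiskerRight_counit

end Triangle

/-- The Eilenberg–Moore category of a finitary monad on a locally finitely presentable
category is locally finitely presentable. -/
theorem stmt4 {K : Type u} [Category.{v} K] (h : LocallyFinitelyPresentable K)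
    (T : CategoryTheory.Monad K) (hT : Monad.Finitary T) :
    LocallyFinitelyPresentable T.Algebra := by
  obtain ⟨hc, S, hSsmall, hSfp, hSdet⟩ := h
  haveI : HasColimitsOfSize.{v, v} K := hc
  haveI hTf : PreservesFilteredColimitsOfSize.{v, v} (T : K ⥤ K) := hT
  haveI : HasColimitsOfSize.{0, 0} K := inferInstance
  haveI : PreservesFilteredColimitsOfSize.{0, 0} (T : K ⥤ K) :=
    preservesSmallestFilteredColimits_of_preservesFilteredColimits _
  haveI : PreservesColimitsOfShape ℕ (T : K ⥤ K) := inferInstance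
  haveI : ∀ {X Y : T.Algebra} {f g : X ⟶ Y}, HasColimit (parallelPair f g) := fun {X Y f g} =>
    HasColimit.mk ⟨coforkAlg f g, coforkAlgIsColimit f g⟩
  haveI : HasCoequalizers T.Algebra := hasCoequalizers_of_hasColimit_parallelPair _
  haveI : HasReflexiveCoequalizers T.Algebra := inferInstance
  have hcolim : HasColimitsOfSize.{v, v} T.Algebra := by
    constructor
    intro J hJ
    exact hasColimitsOfShape_algebra
  refine ⟨hcolim, T.free.obj '' S, ?_, ?_, ?_⟩
  · haveI := hSsmall
    apply small_of_surjective
      (f := fun x : S => (⟨T.free.obj x.1, ⟨x.1, x.2, rfl⟩⟩ : T.free.obj '' S))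
    rintro ⟨y, x, hx, rfl⟩
    exact ⟨⟨x, hx⟩, rfl⟩
  · rintro Y ⟨X, hX, rfl⟩
    haveI hX' : PreservesFilteredColimitsOfSize.{v, v} (coyoneda.obj (op X)) := hSfp X hX
    haveI hforget : PreservesFilteredColimitsOfSize.{v, v} (Monad.forget T) := by
      constructor
      intro J _ _
      haveI : PreservesColimitsOfShape J (T : K ⥤ K) := inferInstance
      infer_instance
    haveI : PreservesFilteredColimitsOfSize.{v, v}
        (Monad.forget T ⋙ coyoneda.obj (op X)) := inferInstance
    have e : coyoneda.obj (op (T.free.obj X)) ≅ Monad.forget T ⋙ coyoneda.obj (op X) :=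
      NatIso.ofComponents (fun A => Equiv.toIso ((Monad.adj T).homEquiv X A))
        (fun {A B} g => by
          ext l
          exact (Monad.adj T).homEquiv_naturality_right l g)
    show PreservesFilteredColimitsOfSize.{v, v} (coyoneda.obj (op (T.free.obj X)))
    constructor
    intro J _ _
    exact preservesColimitsOfShape_of_natIso e.symm
  · intro Y Z fmor hf
    haveI : IsIso ((Monad.forget T).map fmor) := by
      refine hSdet _ ?_
      rintro X hX gmor
      obtain ⟨l, hl, hl'⟩ :=
        hf (T.free.obj X) ⟨X, hX, rfl⟩ (((Monad.adj T).homEquiv X Z).symm gmor)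
      refine ⟨(Monad.adj T).homEquiv X Y l, ?_, ?_⟩
      · show (Monad.adj T).homEquiv X Y l ≫ (Monad.forget T).map fmor = gmor
        rw [← Adjunction.homEquiv_naturality_right, hl, Equiv.apply_symm_apply]
      · intro l'' hl''
        have h1 : ((Monad.adj T).homEquiv X Y).symm l'' ≫ fmor =
            ((Monad.adj T).homEquiv X Z).symm gmor := by
          rw [← Adjunction.homEquiv_naturality_right_symm, hl'']
        have h2 := hl' _ h1
        exact (Equiv.symm_apply_eq ((Monad.adj T).homEquiv X Y)).1 h2
    exact isIso_of_reflects_iso fmor (Monad.forget T)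

end Formal
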